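/- Let X be a real Banach space, let K ⊆ X be closed and nonempty, let x ∈ X \ K, and let x̄ ∈ K be a nearest point to x in K, i.e., ‖x − x̄‖ = d_K(x). Suppose the directional derivative lim_{t→0} (d_K(x + t(x − x̄)) − d_K(x))/t exists, and suppose the norm of X is Gateaux differentiable at x − x̄ with Gateaux derivative f_{x−x̄} ∈ X*. Then d_K is Gateaux differentiable at x and ⟨d_K'(x), y⟩ = f_{x−x̄}(y) for all y ∈ X. -/

import Mathlib

open Filter Topology

/-- A function `f : X → ℝ` is Gateaux differentiable at `x` with Gateaux derivative the
continuous linear functional `A` if for every `y`, `(f (x + t y) - f x)/t → A y` as `t → 0`. -/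
def GateauxDiffAt {X : Type*} [NormedAddCommGroup X] [NormedSpace ℝ X]
    (f : X → ℝ) (x : X) (A : X →L[ℝ] ℝ) : Prop :=
  ∀ y : X, Tendsto (fun t : ℝ => (f (x + t • y) - f x) / t) (𝓝[≠] 0) (𝓝 (A y))

/-- Let `K ⊆ X` be closed and nonempty, `x ∉ K`, and `x̄ ∈ K` a nearest point to `x` in `K`.
If the distance function `d_K` has a directional derivative at `x` in the direction
`x - x̄`, and the norm of `X` is Gateaux differentiable at `x - x̄` with Gateaux derivative
`f`, then `d_K` is Gateaux differentiable at `x` with `⟨d_K'(x), y⟩ = f y` for all `y`. -/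
theorem distance_gateauxDiffAt {X : Type*} [NormedAddCommGroup X] [NormedSpace ℝ X]
    [CompleteSpace X] (K : Set X) (hKc : IsClosed K) (hKne : K.Nonempty)
    (x : X) (hx : x ∉ K) (xbar : X) (hxbar : xbar ∈ K)
    (hnear : ‖x - xbar‖ = Metric.infDist x K)
    (hdir : ∃ L : ℝ, Tendsto
      (fun t : ℝ => (Metric.infDist (x + t • (x - xbar)) K - Metric.infDist x K) / t)
      (𝓝[≠] 0) (𝓝 L))
    (f : X →L[ℝ] ℝ) (hnorm : GateauxDiffAt (fun y : X => ‖y‖) (x - xbar) f) :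
    GateauxDiffAt (fun y : X => Metric.infDist y K) x f := by
  obtain ⟨L, hL⟩ := hdir
  have hlip : ∀ a b : X, Metric.infDist a K ≤ Metric.infDist b K + ‖a - b‖ := by
    intro a b
    simpa [dist_eq_norm] using Metric.infDist_le_infDist_add_dist (x := a) (y := b) (s := K)
  -- d is affine on the segment from xbar to x
  have hseg : ∀ t : ℝ, -1 < t → t < 0 →
      Metric.infDist (x + t • (x - xbar)) K = (1 + t) * Metric.infDist x K := by
    intro t ht1 ht0
    have heq : x + t • (x - xbar) - xbar = (1 + t) • (x - xbar) := by module
    have h1 : Metric.infDist (x + t • (x - xbar)) K ≤ (1 + t) * ‖x - xbar‖ := by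
      have := Metric.infDist_le_dist_of_mem (x := x + t • (x - xbar)) hxbar
      rwa [dist_eq_norm, heq, norm_smul, Real.norm_eq_abs,
        abs_of_pos (by linarith : (0:ℝ) < 1 + t)] at this
    have h2 : Metric.infDist x K ≤ Metric.infDist (x + t • (x - xbar)) K + (-t) * ‖x - xbar‖ := by
      have := hlip x (x + t • (x - xbar))
      have heq2 : x - (x + t • (x - xbar)) = (-t) • (x - xbar) := by module
      rwa [heq2, norm_smul, Real.norm_eq_abs, abs_of_pos (by linarith : (0:ℝ) < -t)] at this
    rw [← hnear] at *
    linarith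
  -- left quotient is constant = d x on (-1, 0)
  have hIoo : ∀ t : ℝ, -1 < t → t < 0 →
      (Metric.infDist (x + t • (x - xbar)) K - Metric.infDist x K) / t = ‖x - xbar‖ := by
    intro t ht1 ht0
    rw [hseg t ht1 ht0, ← hnear, div_eq_iff (ne_of_lt ht0)]
    ring
  have hLeq : L = ‖x - xbar‖ := by
    have hmono : 𝓝[<] (0:ℝ) ≤ 𝓝[≠] (0:ℝ) :=
      nhdsWithin_mono 0 (fun t ht => ne_of_lt ht)
    have h1 : Tendsto (fun t : ℝ =>
        (Metric.infDist (x + t • (x - xbar)) K - Metric.infDist x K) / t)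
        (𝓝[<] 0) (𝓝 L) := hL.mono_left hmono
    have h2 : (fun t : ℝ =>
        (Metric.infDist (x + t • (x - xbar)) K - Metric.infDist x K) / t)
        =ᶠ[𝓝[<] (0:ℝ)] (fun _ => ‖x - xbar‖) := by
      have hgt : ∀ᶠ t in 𝓝[<] (0:ℝ), (-1:ℝ) < t :=
        eventually_nhdsWithin_of_eventually_nhds (eventually_gt_nhds (by norm_num))
      filter_upwards [hgt, self_mem_nhdsWithin] with t h1t h2t
      exact hIoo t h1t h2t
    have h3 : Tendsto (fun t : ℝ =>
        (Metric.infDist (x + t • (x - xbar)) K - Metric.infDist x K) / t)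
        (𝓝[<] 0) (𝓝 ‖x - xbar‖) := by
      rw [tendsto_congr' h2]; exact tendsto_const_nhds
    exact tendsto_nhds_unique h1 h3
  have hstep1 : Tendsto (fun t : ℝ =>
      (Metric.infDist (x + t • (x - xbar)) K - Metric.infDist x K) / t)
      (𝓝[>] 0) (𝓝 ‖x - xbar‖) := by
    rw [← hLeq]
    exact hL.mono_left (nhdsWithin_mono 0 (fun t ht => ne_of_gt ht))
  -- Step 2: right derivative in every direction z equals f z
  have hstep2 : ∀ z : X, Tendsto (fun t : ℝ =>
      (Metric.infDist (x + t • z) K - Metric.infDist x K) / t) (𝓝[>] 0) (𝓝 (f z)) := by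
    intro z
    rw [Metric.tendsto_nhds]
    intro ε hε
    have hε4 : (0:ℝ) < ε / 4 := by linarith
    -- choose s₀ > 0 with ‖u - s₀ z‖ ≤ ‖u‖ + s₀ (ε/4 - f z)
    obtain ⟨s₀, hs₀ineq, hs₀pos⟩ : ∃ s₀ : ℝ,
        ‖x - xbar - s₀ • z‖ < ‖x - xbar‖ + s₀ * (ε / 4 - f z) ∧ 0 < s₀ := by
      have hnz := hnorm (-z)
      have hEv := (Metric.tendsto_nhds.1 hnz) (ε / 4) hε4
      have hEv' : ∀ᶠ s in 𝓝[>] (0:ℝ),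
          dist ((‖x - xbar + s • (-z)‖ - ‖x - xbar‖) / s) (f (-z)) < ε / 4 :=
        hEv.filter_mono (nhdsWithin_mono 0 (fun t ht => ne_of_gt ht))
      have := (hEv'.and self_mem_nhdsWithin).exists
      obtain ⟨s₀, hd, hpos⟩ := this
      refine ⟨s₀, ?_, hpos⟩
      rw [Real.dist_eq, abs_lt] at hd
      have h1 := hd.2
      rw [map_neg] at h1
      have h2 : (‖x - xbar - s₀ • z‖ - ‖x - xbar‖) / s₀ < ε / 4 - f z := by
        have : x - xbar + s₀ • (-z) = x - xbar - s₀ • z := by module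
        rw [this] at h1; linarith
      rw [div_lt_iff₀ hpos] at h2
      linarith
    -- step1 bound pulled back via r = t / s₀
    have hδ : ∀ᶠ r in 𝓝[>] (0:ℝ),
        Metric.infDist x K + r * (‖x - xbar‖ - s₀ * (ε / 4)) <
          Metric.infDist (x + r • (x - xbar)) K := by
      have hb := (Metric.tendsto_nhds.1 hstep1) (s₀ * (ε / 4)) (by positivity)
      filter_upwards [hb, self_mem_nhdsWithin] with r hr hrpos
      rw [Real.dist_eq, abs_lt] at hr
      have hrpos' : (0:ℝ) < r := hrpos
      have h2 : ‖x - xbar‖ - s₀ * (ε / 4) <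
          (Metric.infDist (x + r • (x - xbar)) K - Metric.infDist x K) / r := by
        linarith [hr.1]
      rw [lt_div_iff₀ hrpos'] at h2
      nlinarith [h2]
    have hφ : Tendsto (fun t : ℝ => t / s₀) (𝓝[>] (0:ℝ)) (𝓝[>] (0:ℝ)) := by
      apply tendsto_nhdsWithin_of_tendsto_nhds_of_eventually_within
      · have : Tendsto (fun t : ℝ => t / s₀) (𝓝 (0:ℝ)) (𝓝 (0 / s₀)) :=
          (tendsto_id.div_const s₀)
        simpa using this.mono_left nhdsWithin_le_nhds
      · filter_upwards [self_mem_nhdsWithin] with t ht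
        exact div_pos ht hs₀pos
    have hδ' := hφ.eventually hδ
    -- upper bound
    have hupper : ∀ᶠ t in 𝓝[>] (0:ℝ),
        (‖x - xbar + t • z‖ - ‖x - xbar‖) / t < f z + ε / 4 := by
      have hb := (Metric.tendsto_nhds.1 (hnorm z)) (ε / 4) hε4
      have hb' := hb.filter_mono (nhdsWithin_mono 0 (fun t (ht : t ∈ Set.Ioi (0:ℝ)) => ne_of_gt ht))
      filter_upwards [hb'] with t ht
      rw [Real.dist_eq, abs_lt] at ht
      linarith [ht.2]
    filter_upwards [hδ', hupper, self_mem_nhdsWithin] with t hδt hut htpos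
    rw [Real.dist_eq, abs_lt]
    have hts₀ : 0 < t / s₀ := div_pos htpos hs₀pos
    have htpos' : (0:ℝ) < t := htpos
    constructor
    · -- lower bound: quotient > f z - ε
      obtain ⟨r, hrt, hrpos⟩ : ∃ r : ℝ, r * s₀ = t ∧ 0 < r :=
        ⟨t / s₀, div_mul_cancel₀ t (ne_of_gt hs₀pos), hts₀⟩
      have hrs : t / s₀ = r := by
        rw [← hrt, mul_div_cancel_right₀ r (ne_of_gt hs₀pos)]
      rw [hrs] at hδt
      have hl := hlip (x + r • (x - xbar)) (x + t • z)
      have heq : x + r • (x - xbar) - (x + t • z) = r • (x - xbar - s₀ • z) := by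
        rw [← hrt]; module
      rw [heq, norm_smul, Real.norm_eq_abs, abs_of_pos hrpos] at hl
      have h1 : r * ‖x - xbar - s₀ • z‖ < r * (‖x - xbar‖ + s₀ * (ε / 4 - f z)) :=
        mul_lt_mul_of_pos_left hs₀ineq hrpos
      have key : Metric.infDist x K + (r * s₀) * (f z - ε / 2) <
          Metric.infDist (x + t • z) K := by
        nlinarith [hδt, hl, h1]
      rw [hrt] at key
      have h4 : f z - ε / 2 < (Metric.infDist (x + t • z) K - Metric.infDist x K) / t := by
        rw [lt_div_iff₀ htpos']
        nlinarith [key]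
      linarith [h4]
    · -- upper bound: quotient ≤ (‖u+tz‖-‖u‖)/t < f z + ε/4
      have h1 : Metric.infDist (x + t • z) K ≤ ‖x - xbar + t • z‖ := by
        have := Metric.infDist_le_dist_of_mem (x := x + t • z) hxbar
        have heq : x + t • z - xbar = x - xbar + t • z := by module
        rwa [dist_eq_norm, heq] at this
      have h2 : (Metric.infDist (x + t • z) K - Metric.infDist x K) / t ≤
          (‖x - xbar + t • z‖ - ‖x - xbar‖) / t := by
        rw [← hnear]
        gcongr
      linarith [h2, hut]
  -- Step 3: combine left and right limits
  intro y
  have hright := hstep2 y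
  have hleft : Tendsto (fun t : ℝ =>
      (Metric.infDist (x + t • y) K - Metric.infDist x K) / t) (𝓝[<] 0) (𝓝 (f y)) := by
    have h2 := hstep2 (-y)
    have hneg : Tendsto (fun t : ℝ => -t) (𝓝[<] (0:ℝ)) (𝓝[>] (0:ℝ)) := by
      apply tendsto_nhdsWithin_of_tendsto_nhds_of_eventually_within
      · simpa using (tendsto_neg (0:ℝ)).mono_left nhdsWithin_le_nhds
      · filter_upwards [self_mem_nhdsWithin] with t ht
        simpa using ht
    have h3 := (h2.comp hneg).neg
    have hfy : -(f (-y)) = f y := by simp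
    rw [hfy] at h3
    refine h3.congr fun t => ?_
    simp [Function.comp, neg_smul, smul_neg, div_neg, neg_neg]
  rw [← nhdsLT_sup_nhdsGT (0:ℝ), tendsto_sup]
  exact ⟨hleft, hright⟩
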